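/- Define S_{0,h,q}[n,k] by the recurrence S_{0,h,q}[n,k] = q^{k−1}·S_{0,h,q}[n−1,k−1] + h·[k]_q·S_{0,h,q}[n−1,k] with S_{0,h,q}[n,0]=S_{0,h,q}[0,n]=δ_{0,n}. Then the explicit formula holds: S_{0,h,q}[n,k] = (h^{n−k}/[k]_q!) · ∑_{j=0}^{k} (−1)^{k−j}·q^{C(k−j,2)}·[k choose j]_q·[j]_q^n, where C(m,2)=m(m−1)/2, [k]_q! is the q-factorial, and [k choose j]_q the Gaussian binomial coefficient. -/
import Mathlib

open Finset

/-- The q-integer `[k]_q = 1 + q + ... + q^(k-1)`. -/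
def qint {K : Type*} [CommRing K] (q : K) (k : ℕ) : K := ∑ i ∈ Finset.range k, q ^ i

/-- The q-factorial `[k]_q!`. -/
def qfact {K : Type*} [CommRing K] (q : K) (k : ℕ) : K := ∏ i ∈ Finset.range k, qint q (i + 1)

/-- The Gaussian binomial coefficient. -/
def gauss {K : Type*} [CommRing K] (q : K) : ℕ → ℕ → K
  | 0, 0 => 1
  | 0, _ + 1 => 0
  | _ + 1, 0 => 1
  | n + 1, k + 1 => gauss q n k + q ^ (k + 1) * gauss q n (k + 1)

/-- The numbers `S_{0,h,q}[n,k]`, satisfying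
`S[n,k] = q^(k-1) S[n-1,k-1] + h [k]_q S[n-1,k]` with `S[n,0]=S[0,n]=δ_{0,n}`. -/
def S0 {K : Type*} [CommRing K] (h q : K) : ℕ → ℕ → K
  | 0, 0 => 1
  | 0, _ + 1 => 0
  | _ + 1, 0 => 0
  | n + 1, k + 1 => q ^ k * S0 h q n k + h * qint q (k + 1) * S0 h q n (k + 1)

section Aux
variable {K : Type*} [CommRing K]

lemma qint_succ (q : K) (k : ℕ) : qint q (k + 1) = 1 + q * qint q k := by
  rw [qint, Finset.sum_range_succ', qint, Finset.mul_sum]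
  simp [pow_succ, mul_comm, add_comm]

lemma gauss_succ (q : K) (n k : ℕ) :
    gauss q (n + 1) (k + 1) = gauss q n k + q ^ (k + 1) * gauss q n (k + 1) := rfl

lemma gauss_zero (q : K) (k : ℕ) : gauss q k 0 = 1 := by cases k <;> rfl

lemma gauss_of_lt (q : K) : ∀ n k : ℕ, n < k → gauss q n k = 0
  | 0, _ + 1, _ => rfl
  | n + 1, k + 1, hlt => by
    have h1 : n < k := Nat.lt_of_succ_lt_succ hlt
    rw [gauss_succ, gauss_of_lt q n k h1,
      gauss_of_lt q n (k + 1) (h1.trans (Nat.lt_succ_self k)), mul_zero, add_zero]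

lemma gauss_mul (q : K) : ∀ k i : ℕ,
    qint q (i + 1) * gauss q (k + 1) (i + 1) = qint q (k + 1) * gauss q k i
  | 0, 0 => by
    have h1 : gauss q 0 1 = 0 := rfl
    simp [gauss_succ, gauss_zero, h1]
  | 0, i + 1 => by
    have h0 : gauss q 0 (i + 1) = 0 := rfl
    have h1 : gauss q 0 (i + 2) = 0 := rfl
    rw [gauss_succ, h0, h1, mul_zero, mul_zero, zero_add, mul_zero]
  | k + 1, 0 => by
    have ih := gauss_mul q k 0
    have e1 : qint q 1 = 1 := by simp [qint]
    have e2 : qint q (k + 2) = 1 + q * qint q (k + 1) := qint_succ q (k + 1)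
    have g0 : gauss q k 0 = 1 := gauss_zero q k
    rw [gauss_succ, gauss_zero]
    linear_combination e1 + q * ih - e2 + q * qint q (k + 1) * g0
  | k + 1, i + 1 => by
    have ih1 := gauss_mul q k i
    have ih2 := gauss_mul q k (i + 1)
    have e1 : qint q (i + 2) = 1 + q * qint q (i + 1) := qint_succ q (i + 1)
    have e2 : qint q (k + 2) = 1 + q * qint q (k + 1) := qint_succ q (k + 1)
    have P : gauss q (k + 1) (i + 1) = gauss q k i + q ^ (i + 1) * gauss q k (i + 1) :=
      gauss_succ q k i
    rw [gauss_succ q (k + 1) (i + 1)]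
    linear_combination q ^ (i + 2) * ih2 +
      gauss q (k + 1) (i + 1) * e1 -
      gauss q (k + 1) (i + 1) * e2 + q * ih1 - q * qint q (k + 1) * P

lemma pascal_split (q : K) (f : ℕ → K) (k : ℕ) :
    ∑ j ∈ range (k + 2), (-1 : K) ^ (k + 1 - j) * q ^ ((k + 1 - j).choose 2) * gauss q (k + 1) j * f j
      = (∑ i ∈ range (k + 1), (-1 : K) ^ (k - i) * q ^ ((k - i).choose 2) * gauss q k i * f (i + 1))
        - q ^ k * ∑ j ∈ range (k + 1), (-1 : K) ^ (k - j) * q ^ ((k - j).choose 2) * gauss q k j * f j := by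
  rw [Finset.sum_range_succ']
  have key : ∀ i ∈ range (k + 1),
      (-1 : K) ^ (k + 1 - (i + 1)) * q ^ ((k + 1 - (i + 1)).choose 2) * gauss q (k + 1) (i + 1) * f (i + 1)
        = (-1 : K) ^ (k - i) * q ^ ((k - i).choose 2) * gauss q k i * f (i + 1)
          + (-1 : K) ^ (k + 1 - (i + 1)) * q ^ ((k + 1 - (i + 1)).choose 2 + (i + 1)) * gauss q k (i + 1) * f (i + 1) := by
    intro i _
    rw [Nat.succ_sub_succ, gauss_succ, pow_add]
    ring
  rw [Finset.sum_congr rfl key, Finset.sum_add_distrib]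
  have hT : ∑ i ∈ range (k + 1),
      (-1 : K) ^ (k + 1 - (i + 1)) * q ^ ((k + 1 - (i + 1)).choose 2 + (i + 1)) * gauss q k (i + 1) * f (i + 1)
      = -(q ^ k * ∑ j ∈ range (k + 1), (-1 : K) ^ (k - j) * q ^ ((k - j).choose 2) * gauss q k j * f j)
        - (-1 : K) ^ (k + 1 - 0) * q ^ ((k + 1 - 0).choose 2 + 0) * gauss q k 0 * f 0 := by
    have h1 := Finset.sum_range_succ'
      (fun j => (-1 : K) ^ (k + 1 - j) * q ^ ((k + 1 - j).choose 2 + j) * gauss q k j * f j) (k + 1)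
    have h2 := Finset.sum_range_succ
      (fun j => (-1 : K) ^ (k + 1 - j) * q ^ ((k + 1 - j).choose 2 + j) * gauss q k j * f j) (k + 1)
    have h3 : gauss q k (k + 1) = 0 := gauss_of_lt q k (k + 1) (Nat.lt_succ_self k)
    rw [h3, mul_zero, zero_mul, add_zero] at h2
    have h4 : ∀ j ∈ range (k + 1),
        (-1 : K) ^ (k + 1 - j) * q ^ ((k + 1 - j).choose 2 + j) * gauss q k j * f j
          = -(q ^ k * ((-1 : K) ^ (k - j) * q ^ ((k - j).choose 2) * gauss q k j * f j)) := by
      intro j hj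
      have hj' : j ≤ k := Nat.lt_succ_iff.mp (mem_range.mp hj)
      have hs : k + 1 - j = (k - j) + 1 := by omega
      have he : ((k - j) + 1).choose 2 + j = (k - j).choose 2 + k := by
        have hc : ((k - j) + 1).choose 2 = (k - j).choose 1 + (k - j).choose 2 :=
          Nat.choose_succ_succ (k - j) 1
        rw [hc, Nat.choose_one_right]; omega
      rw [hs, he, pow_add, pow_succ]
      ring
    rw [Finset.sum_congr rfl h4] at h2
    have h5 : ∑ j ∈ range (k + 1),
        -(q ^ k * ((-1 : K) ^ (k - j) * q ^ ((k - j).choose 2) * gauss q k j * f j))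
        = -(q ^ k * ∑ j ∈ range (k + 1), (-1 : K) ^ (k - j) * q ^ ((k - j).choose 2) * gauss q k j * f j) := by
      rw [Finset.sum_neg_distrib, Finset.mul_sum]
    rw [h5] at h2
    -- h1 : ∑_{range(k+2)} t = ∑_{range(k+1)} t(i+1) + t 0 ; h2 : ∑_{range(k+2)} t = -(q^k * S2)
    have h6 := h1.symm.trans h2
    linear_combination h6
  rw [hT]
  simp only [Nat.sub_zero, Nat.add_zero, gauss_zero, mul_one]
  ring

/-- The alternating sum. -/
def Asum {K : Type*} [CommRing K] (q : K) (n k : ℕ) : K :=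
  ∑ j ∈ range (k + 1), (-1 : K) ^ (k - j) * q ^ ((k - j).choose 2) * gauss q k j * (qint q j) ^ n

lemma Asum_split (q : K) (n k : ℕ) :
    Asum q n (k + 1)
      = (∑ i ∈ range (k + 1), (-1 : K) ^ (k - i) * q ^ ((k - i).choose 2) * gauss q k i * (qint q (i + 1)) ^ n)
        - q ^ k * Asum q n k :=
  pascal_split q (fun j => (qint q j) ^ n) k

lemma Asum_rec (q : K) (n k : ℕ) :
    Asum q (n + 1) (k + 1) = qint q (k + 1) * (Asum q n (k + 1) + q ^ k * Asum q n k) := by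
  have step1 : Asum q (n + 1) (k + 1)
      = qint q (k + 1) *
        ∑ i ∈ range (k + 1), (-1 : K) ^ (k - i) * q ^ ((k - i).choose 2) * gauss q k i * (qint q (i + 1)) ^ n := by
    rw [Asum, Finset.sum_range_succ']
    have h0 : qint q 0 = 0 := by simp [qint]
    rw [h0, zero_pow (Nat.succ_ne_zero n), mul_zero, add_zero, Finset.mul_sum]
    refine Finset.sum_congr rfl ?_
    intro i _
    rw [Nat.succ_sub_succ]
    have := gauss_mul q k i
    calc (-1 : K) ^ (k - i) * q ^ ((k - i).choose 2) * gauss q (k + 1) (i + 1) * qint q (i + 1) ^ (n + 1)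
        = (-1 : K) ^ (k - i) * q ^ ((k - i).choose 2) * (qint q (i + 1) * gauss q (k + 1) (i + 1)) * qint q (i + 1) ^ n := by
          rw [pow_succ]; ring
      _ = qint q (k + 1) * ((-1 : K) ^ (k - i) * q ^ ((k - i).choose 2) * gauss q k i * qint q (i + 1) ^ n) := by
          rw [this]; ring
  rw [step1, Asum_split]
  ring

lemma Asum_zero (q : K) : ∀ k : ℕ, Asum q 0 (k + 1) = 0
  | 0 => by
    have hA : Asum q 0 0 = 1 := by simp [Asum, gauss_zero]
    rw [Asum_split q 0 0, hA]
    simp [gauss_zero]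
  | k + 1 => by
    have h := Asum_split q 0 (k + 1)
    rw [h, Asum_zero q k, mul_zero, sub_zero]
    have : ∀ i ∈ range (k + 2),
        (-1 : K) ^ (k + 1 - i) * q ^ ((k + 1 - i).choose 2) * gauss q (k + 1) i * (qint q (i + 1)) ^ 0
          = (-1 : K) ^ (k + 1 - i) * q ^ ((k + 1 - i).choose 2) * gauss q (k + 1) i * (qint q i) ^ 0 := by
      intro i _; simp
    rw [Finset.sum_congr rfl this]
    show Asum q 0 (k + 1) = 0
    exact Asum_zero q k

lemma Asum_vanish (q : K) : ∀ n k : ℕ, n < k → Asum q n k = 0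
  | 0, k + 1, _ => Asum_zero q k
  | n + 1, k + 1, hlt => by
    have h1 : n < k := Nat.lt_of_succ_lt_succ hlt
    rw [Asum_rec, Asum_vanish q n (k + 1) (h1.trans (Nat.lt_succ_self k)),
      Asum_vanish q n k h1, mul_zero, add_zero, mul_zero]

lemma main_id (h q : K) : ∀ n k : ℕ, qfact q k * S0 h q n k = h ^ (n - k) * Asum q n k
  | 0, 0 => by
    have : Asum q 0 0 = 1 := by simp [Asum, gauss_zero]
    simp [qfact, S0, this]
  | 0, k + 1 => by
    rw [Asum_vanish q 0 (k + 1) (Nat.succ_pos k)]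
    simp [S0]
  | n + 1, 0 => by
    have : Asum q (n + 1) 0 = 0 := by
      simp [Asum, qint, zero_pow (Nat.succ_ne_zero n)]
    simp [S0, this]
  | n + 1, k + 1 => by
    have ih1 := main_id h q n k
    have ih2 := main_id h q n (k + 1)
    have hrec := Asum_rec q n k
    have hqf : qfact q (k + 1) = qfact q k * qint q (k + 1) := Finset.prod_range_succ _ _
    show qfact q (k + 1) * (q ^ k * S0 h q n k + h * qint q (k + 1) * S0 h q n (k + 1))
      = h ^ (n + 1 - (k + 1)) * Asum q (n + 1) (k + 1)
    rw [Nat.succ_sub_succ, hrec, hqf]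
    rw [hqf] at ih2
    rcases le_or_gt (k + 1) n with hn | hn
    · have e : h ^ (n - k) = h ^ (n - (k + 1)) * h := by
        rw [show n - k = (n - (k + 1)) + 1 by omega, pow_succ]
      rw [e] at ih1 ⊢
      linear_combination qint q (k + 1) * q ^ k * ih1 + h * qint q (k + 1) * ih2
    · have hv : Asum q n (k + 1) = 0 := Asum_vanish q n (k + 1) (by omega)
      have h1 : n - (k + 1) = 0 := by omega
      have h2 : n - k = 0 := by omega
      rw [h1, pow_zero, one_mul, hv] at ih2
      rw [h2, pow_zero, one_mul] at ih1 ⊢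
      rw [hv]
      linear_combination qint q (k + 1) * q ^ k * ih1 + h * qint q (k + 1) * ih2

end Aux

theorem stmt_17 {K : Type*} [Field K] (h q : K) (n k : ℕ) (hfact : qfact q k ≠ 0) :
    S0 h q n k =
      h ^ (n - k) / qfact q k *
        ∑ j ∈ Finset.range (k + 1),
          (-1 : K) ^ (k - j) * q ^ (Nat.choose (k - j) 2) * gauss q k j * (qint q j) ^ n := by
  have hm := main_id h q n k
  have ha : Asum q n k
      = ∑ j ∈ Finset.range (k + 1),
          (-1 : K) ^ (k - j) * q ^ (Nat.choose (k - j) 2) * gauss q k j * (qint q j) ^ n := rfl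
  rw [ha] at hm
  rw [div_mul_eq_mul_div, eq_div_iff hfact]
  linear_combination hm
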